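/- Let ρ be a real number with ρ ∉ [0,1], and let f, g be negative real numbers such that either f + g² ≥ 0 or 4|ρ(1−ρ)| < −g²/(f+g²). Then for every ω > 0 the two roots μ₊, μ₋ of the quadratic ρx² − γ(ω)x + (1−ρ) = 0 have distinct absolute values: |μ₊| ≠ |μ₋|. -/

import Mathlib

/-- `γ(ω) = (f + iωg + ω²)/(f + iωg)`. -/
noncomputable def gam (f g ω : ℝ) : ℂ :=
  ((f : ℂ) + Complex.I * ω * g + (ω : ℂ) ^ 2) / ((f : ℂ) + Complex.I * ω * g)

theorem stmt_17 (ρ : ℝ) (hρ : ρ ∉ Set.Icc (0 : ℝ) 1) (f g : ℝ)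
    (hf : f < 0) (hg : g < 0)
    (hcond : f + g ^ 2 ≥ 0 ∨ 4 * |ρ * (1 - ρ)| < -g ^ 2 / (f + g ^ 2)) :
    ∀ ω : ℝ, 0 < ω → ∀ μp μm : ℂ,
      (∀ x : ℂ, (ρ : ℂ) * x ^ 2 - gam f g ω * x + (1 - (ρ : ℂ))
        = (ρ : ℂ) * (x - μp) * (x - μm)) →
      ‖μp‖ ≠ ‖μm‖ := by
  intro ω hω μp μm h habs
  have hρ0 : ρ < 0 ∨ 1 < ρ := by
    rcases lt_or_ge ρ 0 with h' | h'
    · exact Or.inl h'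
    · right; by_contra h''; exact hρ ⟨h', le_of_not_gt h''⟩
  have hρprod : ρ * (1 - ρ) < 0 := by rcases hρ0 with h' | h' <;> nlinarith
  have hρne : (ρ : ℂ) ≠ 0 := by
    simp only [ne_eq, Complex.ofReal_eq_zero]
    rcases hρ0 with h' | h' <;> intro hc <;> linarith [hc ▸ h']
  have hρ1 : (1 : ℂ) - (ρ : ℂ) ≠ 0 := by
    intro hc
    have : (ρ : ℝ) = 1 := by
      have : ((ρ : ℂ)) = 1 := by linear_combination -hc
      exact_mod_cast this
    rcases hρ0 with h' | h' <;> linarith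
  have hP : (1 : ℂ) - (ρ : ℂ) = (ρ : ℂ) * μp * μm := by linear_combination h 0
  have hS : gam f g ω = (ρ : ℂ) * (μp + μm) := by linear_combination h 0 - h 1
  have hμm : μm ≠ 0 := by
    intro hc; rw [hc] at hP; simp at hP; exact hρ1 (by rw [hP])
  have hμp : μp ≠ 0 := by
    intro hc; rw [hc] at hP; simp at hP; exact hρ1 (by rw [hP])
  set w : ℂ := μp / μm with hwdef
  have hwne : w ≠ 0 := div_ne_zero hμp hμm
  have habsw : ‖w‖ = 1 := by
    rw [hwdef, norm_div, habs, div_self]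
    exact norm_ne_zero_iff.mpr hμm
  have hnsq : Complex.normSq w = 1 := by
    rw [Complex.normSq_eq_norm_sq, habsw]; norm_num
  have hinvconj : w⁻¹ = (starRingEnd ℂ) w := by
    rw [Complex.inv_def, hnsq]; simp
  have hsum : w + w⁻¹ = ((2 * w.re : ℝ) : ℂ) := by
    rw [hinvconj, Complex.add_conj]
  have hwre1 : w.re ≤ 1 := by
    calc w.re ≤ ‖w‖ := Complex.re_le_norm w
    _ = 1 := habsw
  set c : ℝ := 2 * w.re + 2 with hcdef
  have hc4 : c ≤ 4 := by simp only [hcdef]; linarith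
  have hw : μp = w * μm := (div_mul_cancel₀ _ hμm).symm
  have hinv : w * w⁻¹ = 1 := mul_inv_cancel₀ hwne
  have e1 : gam f g ω ^ 2 = (ρ : ℂ) ^ 2 * (w + 1) ^ 2 * μm ^ 2 := by
    rw [hS, hw]; ring
  have e2 : (1 : ℂ) - (ρ : ℂ) = (ρ : ℂ) * w * μm ^ 2 := by
    rw [hP, hw]; ring
  have hkey : gam f g ω ^ 2 = (ρ : ℂ) * (1 - (ρ : ℂ)) * (w + w⁻¹ + 2) := by
    rw [e1, e2]
    field_simp
    ring
  set k : ℝ := ρ * (1 - ρ) * c with hkdef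
  have hkey2 : gam f g ω ^ 2 = ((k : ℝ) : ℂ) := by
    rw [hkey, hsum, hkdef, hcdef]; push_cast; ring
  have hz : ((f : ℂ) + Complex.I * ω * g) ≠ 0 := by
    intro hc
    have := congrArg Complex.re hc
    simp [Complex.add_re, Complex.mul_re, Complex.mul_im] at this
    linarith
  have hγz : gam f g ω * ((f : ℂ) + Complex.I * ω * g)
      = (f : ℂ) + Complex.I * ω * g + (ω : ℂ) ^ 2 := by
    rw [gam]; field_simp
  have heq : ((f : ℂ) + Complex.I * ω * g + (ω : ℂ) ^ 2) ^ 2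
      = ((k : ℝ) : ℂ) * ((f : ℂ) + Complex.I * ω * g) ^ 2 := by
    calc ((f : ℂ) + Complex.I * ω * g + (ω : ℂ) ^ 2) ^ 2
        = (gam f g ω * ((f : ℂ) + Complex.I * ω * g)) ^ 2 := by rw [hγz]
      _ = gam f g ω ^ 2 * ((f : ℂ) + Complex.I * ω * g) ^ 2 := by ring
      _ = ((k : ℝ) : ℂ) * ((f : ℂ) + Complex.I * ω * g) ^ 2 := by rw [hkey2]
  have him := congrArg Complex.im heq
  have hre := congrArg Complex.re heq
  simp [Complex.add_im, Complex.add_re, Complex.mul_im, Complex.mul_re, pow_two] at him hre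
  -- him should give: (f + ω^2) * (ω*g) relation; hre the real part relation
  have hωg : ω * g ≠ 0 := by
    intro hc; nlinarith [mul_neg_of_pos_of_neg hω hg]
  have him' : f + ω ^ 2 = k * f := by
    have h2 : (f + ω ^ 2) * (ω * g) = (k * f) * (ω * g) := by linear_combination him / 2
    exact mul_right_cancel₀ hωg h2
  have hre' : (f + ω ^ 2) ^ 2 - ω ^ 2 * g ^ 2 = k * (f ^ 2 - ω ^ 2 * g ^ 2) := by
    linear_combination hre
  have hfac : (k - 1) * (k * f ^ 2 + ω ^ 2 * g ^ 2) = 0 := by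
    linear_combination hre' - (f + ω ^ 2 + k * f) * him'
  have hk1 : k ≠ 1 := by
    intro hc; rw [hc] at him'; nlinarith
  have hkf : k * f ^ 2 = -(ω ^ 2 * g ^ 2) := by
    rcases mul_eq_zero.mp hfac with h' | h'
    · exact absurd (by linarith : k = 1) hk1
    · linarith
  have hkneg : k < 0 := by nlinarith [sq_nonneg f, sq_nonneg (ω * g), mul_pos (mul_pos hω hω) (mul_pos (neg_pos.mpr hg) (neg_pos.mpr hg))]
  have hkfg : k * (f + g ^ 2) = g ^ 2 := by
    have hfne : f ≠ 0 := ne_of_lt hf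
    have : f * (k * f + (k - 1) * g ^ 2) = 0 := by
      linear_combination hkf - g ^ 2 * him'
    have h3 : k * f + (k - 1) * g ^ 2 = 0 := by
      rcases mul_eq_zero.mp this with h' | h'
      · exact absurd h' hfne
      · exact h'
    linarith
  have hg2 : 0 < g ^ 2 := by nlinarith
  have hkle : ∀ u : ℝ, 0 ≤ u → k * u ≤ 0 := fun u hu => mul_nonpos_of_nonpos_of_nonneg hkneg.le hu
  rcases hcond with hcond1 | hcond2
  · linarith [hkle (f + g ^ 2) hcond1, hkfg]
  · have hfg : f + g ^ 2 < 0 := by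
      by_contra h'
      push_neg at h'
      linarith [hkle (f + g ^ 2) h', hkfg]
    have hdiv : -g ^ 2 / (f + g ^ 2) = -k := by
      rw [div_eq_iff (ne_of_lt hfg)]
      linear_combination hkfg
    have habs_eq : |ρ * (1 - ρ)| = -(ρ * (1 - ρ)) := abs_of_neg hρprod
    have hk4 : 4 * (ρ * (1 - ρ)) ≤ k := by
      have h6 : 0 ≤ (4 - c) * (-(ρ * (1 - ρ))) :=
        mul_nonneg (by linarith) (by linarith)
      have h7 : k - 4 * (ρ * (1 - ρ)) = (4 - c) * (-(ρ * (1 - ρ))) := by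
        rw [hkdef]; ring
      linarith
    rw [habs_eq, hdiv] at hcond2
    linarith
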